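/- arXiv:2307.10026 — 3 statements merged into one kernel-verified Lean document; each statement's English description precedes it below -/
import Mathlib

section
/- For every linear predictor of the form w = [w1, w2, 0_d] ∈ ℝ^{3d} with (w1, w2) ≠ (0, 0), the accuracy of w on the context-c1 distribution equals 0.5 · erfc( −((w1 + w2)ᵀμ) / (σ·√(2(‖w1‖₂² + γ‖w2‖₂²))) ). -/
open MeasureTheory ProbabilityTheory Real Filter
open scoped ENNReal NNReal

noncomputable section

/-- Complementary error function `erfc x = (2/√π) ∫_x^∞ e^{−t²} dt`. -/
def erfc (x : ℝ) : ℝ := 2 / Real.sqrt Real.pi * ∫ t in Set.Ioi x, Real.exp (-t ^ 2)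

/-- A vector in `ℝ^d`. -/
abbrev Vec (d : ℕ) := Fin d → ℝ

/-- The input space `ℝ^{3d}`, viewed as three blocks `x = [x1, x2, x3]`. -/
abbrev Inp (d : ℕ) := Vec d × Vec d × Vec d

/-- Euclidean dot product on `ℝ^d`. -/
def dot {d : ℕ} (v w : Vec d) : ℝ := ∑ i, v i * w i

/-- Euclidean norm on `ℝ^d`. -/
def vnorm {d : ℕ} (v : Vec d) : ℝ := Real.sqrt (∑ i, v i ^ 2)

/-- Euclidean norm on the full input space `ℝ^{3d}`. -/
def xnorm {d : ℕ} (x : Inp d) : ℝ :=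
  Real.sqrt ((∑ i, x.1 i ^ 2) + (∑ i, x.2.1 i ^ 2) + ∑ i, x.2.2 i ^ 2)

/-- Value `wᵀx` of the linear predictor `w` at input `x`. -/
def pred {d : ℕ} (w x : Inp d) : ℝ := dot w.1 x.1 + dot w.2.1 x.2.1 + dot w.2.2 x.2.2

/-- Isotropic Gaussian `N(m, v·I_d)` on `ℝ^d` (product of coordinate Gaussians). -/
def gaussVec (d : ℕ) (m : Vec d) (v : ℝ) : Measure (Vec d) :=
  Measure.pi fun i => gaussianReal (m i) (Real.toNNReal v)

/-- Conditional law of `x` given the label `y` in context `c1`: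
`x1 ~ N(μy, σ²I)`, `x2 ~ N(μy, γσ²I)`, `x3 ~ N(μ, η²I)`, independent blocks. -/
def condX1 (d : ℕ) (μ : Vec d) (σ γ η : ℝ) (y : ℝ) : Measure (Inp d) :=
  (gaussVec d (fun i => μ i * y) (σ ^ 2)).prod
    ((gaussVec d (fun i => μ i * y) (γ * σ ^ 2)).prod
      (gaussVec d μ (η ^ 2)))

/-- Conditional law of `x` given the label `y` in context `c2`:
`x1 ~ N(μy, σ²I)`, `x2 ~ N(−μy, (σ²/γ)I)`, `x3 ~ N(−μ, η²I)`, independent blocks. -/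
def condX2 (d : ℕ) (μ : Vec d) (σ γ η : ℝ) (y : ℝ) : Measure (Inp d) :=
  (gaussVec d (fun i => μ i * y) (σ ^ 2)).prod
    ((gaussVec d (fun i => -μ i * y) (σ ^ 2 / γ)).prod
      (gaussVec d (fun i => -μ i) (η ^ 2)))

/-- Joint law of `(x, y)`: `y` uniform on `{−1, 1}`, then `x ~ cond y`. -/
def jointOf {d : ℕ} (cond : ℝ → Measure (Inp d)) : Measure (Inp d × ℝ) :=
  (2 : ℝ≥0∞)⁻¹ • (cond 1).prod (Measure.dirac (1 : ℝ))
    + (2 : ℝ≥0∞)⁻¹ • (cond (-1)).prod (Measure.dirac (-1 : ℝ))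

/-- The context-`c1` distribution over `(x, y)`. -/
def Pc1 (d : ℕ) (μ : Vec d) (σ γ η : ℝ) : Measure (Inp d × ℝ) :=
  jointOf (condX1 d μ σ γ η)

/-- The context-`c2` distribution over `(x, y)`. -/
def Pc2 (d : ℕ) (μ : Vec d) (σ γ η : ℝ) : Measure (Inp d × ℝ) :=
  jointOf (condX2 d μ σ γ η)

/-- Accuracy `Acc_P(w) = P(sign(wᵀx) = y)` of linear predictor `w` under joint law `P`. -/
def AccP {d : ℕ} (P : Measure (Inp d × ℝ)) (w : Inp d) : ℝ :=
  (P {p | Real.sign (pred w p.1) = p.2}).toReal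

/-- Norm-bounded linear predictors `W1 = {w ∈ ℝ^{3d} : ‖w‖₂ ≤ 1}`. -/
def W1 (d : ℕ) : Set (Inp d) := {w | xnorm w ≤ 1}

/-- Population exponential loss `E_P[exp(−y·wᵀx)]`. -/
def expLoss {d : ℕ} (P : Measure (Inp d × ℝ)) (w : Inp d) : ℝ :=
  ∫ p, Real.exp (-(p.2 * pred w p.1)) ∂P

end

section Aux

open Set

variable {α β : Type*} [MeasurableSpace α] [MeasurableSpace β]

lemma pdf_conv (a b : ℝ) (u v : ℝ≥0) (hu : u ≠ 0) (hv : v ≠ 0) (z : ℝ) :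
    ∫ x, gaussianPDFReal a u x * gaussianPDFReal (b + x) v z
      = gaussianPDFReal (a + b) (u + v) z := by
  have hU : (0:ℝ) < u := lt_of_le_of_ne u.coe_nonneg (by exact_mod_cast hu.symm)
  have hV : (0:ℝ) < v := lt_of_le_of_ne v.coe_nonneg (by exact_mod_cast hv.symm)
  set U : ℝ := (u:ℝ) with hUdef
  set V : ℝ := (v:ℝ) with hVdef
  set k : ℝ := (U + V) / (2 * U * V) with hk
  have hkpos : 0 < k := by positivity
  set c : ℝ := (a * V + (z - b) * U) / (U + V) with hc
  set E : ℝ := -(z - a - b)^2 / (2 * (U + V)) with hE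
  have key : ∀ x : ℝ, gaussianPDFReal a u x * gaussianPDFReal (b + x) v z
      = ((√(2 * π * U))⁻¹ * (√(2 * π * V))⁻¹ * rexp E) * rexp (-k * (x - c)^2) := by
    intro x
    have hx : (-(x - a)^2 / (2 * U)) + (-(z - (b + x))^2 / (2 * V))
        = E + (-k * (x - c)^2) := by
      rw [hE, hk, hc]; field_simp; ring
    simp only [gaussianPDFReal]
    rw [mul_mul_mul_comm, ← Real.exp_add, hx, Real.exp_add]
    ring
  rw [MeasureTheory.integral_congr_ae (ae_of_all _ key), integral_const_mul]
  have hint : ∫ x : ℝ, rexp (-k * (x - c)^2) = √(π / k) := by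
    rw [integral_sub_right_eq_self (fun x => rexp (-k * x^2)) c]
    exact integral_gaussian k
  rw [hint]
  simp only [gaussianPDFReal]
  have hUV : (((u + v : ℝ≥0)) : ℝ) = U + V := by push_cast; ring
  rw [hUV]
  have harg : -(z - (a + b)) ^ 2 / (2 * (U + V)) = E := by rw [hE]; ring_nf
  rw [harg]
  have hpk : π / k = 2 * π * (U * V / (U + V)) := by rw [hk]; field_simp
  have hconst : (√(2 * π * U))⁻¹ * (√(2 * π * V))⁻¹ * √(π / k) = (√(2 * π * (U + V)))⁻¹ := by
    rw [hpk, ← Real.sqrt_inv, ← Real.sqrt_inv, ← Real.sqrt_mul (by positivity),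
      ← Real.sqrt_mul (by positivity), ← Real.sqrt_inv]
    congr 1
    field_simp
  rw [show (√(2 * π * U))⁻¹ * (√(2 * π * V))⁻¹ * rexp E * √(π / k)
      = ((√(2 * π * U))⁻¹ * (√(2 * π * V))⁻¹ * √(π / k)) * rexp E by ring, hconst]

lemma lpdf_conv (a b : ℝ) (u v : ℝ≥0) (hu : u ≠ 0) (hv : v ≠ 0) (z : ℝ) :
    ∫⁻ x, gaussianPDF a u x * gaussianPDF (b + x) v z
      = gaussianPDF (a + b) (u + v) z := by
  have hint : Integrable (fun x => gaussianPDFReal a u x * gaussianPDFReal (b + x) v z) := by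
    have h1 : ∀ x, gaussianPDFReal a u x * gaussianPDFReal (b + x) v z
        = (√(2 * π * v))⁻¹ * (rexp (-(x - (z-b))^2 / (2*(v:ℝ))) * gaussianPDFReal a u x) := by
      intro x; simp only [gaussianPDFReal]
      rw [show z - (b+x) = -(x - (z-b)) by ring, neg_sq]; ring
    simp_rw [h1]
    apply Integrable.const_mul
    apply Integrable.bdd_mul (c := 1) (integrable_gaussianPDFReal a u)
    · apply Measurable.aestronglyMeasurable; fun_prop
    · refine ae_of_all _ fun x => ?_
      rw [norm_of_nonneg (Real.exp_nonneg _)]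
      apply Real.exp_le_one_iff.2
      apply div_nonpos_of_nonpos_of_nonneg
      · simp [sq_nonneg]
      · positivity
  simp only [gaussianPDF]
  have hmul : ∀ x : ℝ, ENNReal.ofReal (gaussianPDFReal a u x)
        * ENNReal.ofReal (gaussianPDFReal (b + x) v z)
      = ENNReal.ofReal (gaussianPDFReal a u x * gaussianPDFReal (b + x) v z) :=
    fun x => (ENNReal.ofReal_mul (gaussianPDFReal_nonneg a u _)).symm
  simp_rw [hmul]
  rw [← ofReal_integral_eq_lintegral_ofReal hint (ae_of_all _ fun x =>
    mul_nonneg (gaussianPDFReal_nonneg _ _ _) (gaussianPDFReal_nonneg _ _ _)),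
    pdf_conv a b u v hu hv z]

lemma gauss_conv (a b : ℝ) (u v : ℝ≥0) :
    ((gaussianReal a u).prod (gaussianReal b v)).map (fun p : ℝ × ℝ => p.1 + p.2)
      = gaussianReal (a + b) (u + v) := by
  by_cases hu : u = 0
  · subst hu
    rw [gaussianReal_zero_var, Measure.dirac_prod, Measure.map_map (by fun_prop) (by fun_prop)]
    have : ((fun p : ℝ × ℝ => p.1 + p.2) ∘ Prod.mk a) = (a + ·) := rfl
    rw [this, gaussianReal_map_const_add, zero_add, add_comm b a]
  by_cases hv : v = 0
  · subst hv
    rw [gaussianReal_zero_var, Measure.prod_dirac, Measure.map_map (by fun_prop) (by fun_prop)]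
    have : ((fun p : ℝ × ℝ => p.1 + p.2) ∘ (fun x => (x, b))) = (· + b) := rfl
    rw [this, gaussianReal_map_add_const, add_zero]
  ext s hs
  rw [Measure.map_apply (by fun_prop) hs,
    Measure.prod_apply (hs.preimage (by fun_prop))]
  have h1 : ∀ x : ℝ, (gaussianReal b v) (Prod.mk x ⁻¹' ((fun p : ℝ × ℝ => p.1 + p.2) ⁻¹' s))
      = ∫⁻ z in s, gaussianPDF (b + x) v z := by
    intro x
    have : (Prod.mk x ⁻¹' ((fun p : ℝ × ℝ => p.1 + p.2) ⁻¹' s)) = (x + ·) ⁻¹' s := rfl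
    rw [this, ← Measure.map_apply (by fun_prop) hs, gaussianReal_map_const_add,
      gaussianReal_apply _ (by simp [hv]) s]
  simp_rw [h1]
  have hjm : Measurable (fun p : ℝ × ℝ => gaussianPDF (b + p.1) v p.2) := by
    apply Measurable.ennreal_ofReal
    simp only [gaussianPDFReal]
    fun_prop
  have hmint : Measurable (fun x => ∫⁻ z in s, gaussianPDF (b + x) v z) :=
    Measurable.lintegral_prod_right (f := fun x z => gaussianPDF (b + x) v z) hjm
  rw [gaussianReal_of_var_ne_zero _ hu,
    lintegral_withDensity_eq_lintegral_mul _ (measurable_gaussianPDF a u)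
      hmint]
  simp only [Pi.mul_apply]
  have hpush : ∀ x : ℝ, gaussianPDF a u x * ∫⁻ z in s, gaussianPDF (b + x) v z
      = ∫⁻ z in s, gaussianPDF a u x * gaussianPDF (b + x) v z := fun x =>
    (lintegral_const_mul' _ _ ENNReal.ofReal_ne_top).symm
  simp_rw [hpush]
  rw [lintegral_lintegral_swap
    (((((measurable_gaussianPDF a u).comp measurable_fst).mul hjm)).aemeasurable)]
  have h2 : ∀ z : ℝ, ∫⁻ x, gaussianPDF a u x * gaussianPDF (b + x) v z
      = gaussianPDF (a + b) (u + v) z := fun z => lpdf_conv a b u v hu hv z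
  simp_rw [h2]
  rw [← gaussianReal_apply _ (by simp [hu]) s]

lemma map_prod_add (P : Measure α) (Q : Measure β) [SFinite P] [SFinite Q]
    {f : α → ℝ} {g : β → ℝ} (hf : Measurable f) (hg : Measurable g) :
    (P.prod Q).map (fun p => f p.1 + g p.2)
      = ((P.map f).prod (Q.map g)).map (fun p : ℝ × ℝ => p.1 + p.2) := by
  rw [Measure.map_prod_map _ _ hf hg,
    Measure.map_map (by fun_prop) (by exact hf.prodMap hg)]
  rfl

lemma gauss_pi_dot : ∀ (n : ℕ) (c m : Fin n → ℝ) (v : Fin n → ℝ≥0),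
    (Measure.pi fun i => gaussianReal (m i) (v i)).map (fun x => ∑ i, c i * x i)
      = gaussianReal (∑ i, c i * m i) (∑ i, (c i ^ 2).toNNReal * v i) := by
  intro n
  induction n with
  | zero =>
    intro c m v
    simp only [Finset.univ_eq_empty, Finset.sum_empty]
    rw [show (fun x : Fin 0 → ℝ => (0:ℝ)) = (fun _ => 0) from rfl, Measure.map_const,
      measure_univ, one_smul, gaussianReal_zero_var]
  | succ n ih =>
    intro c m v
    have hmp := measurePreserving_piFinSuccAbove (fun i => gaussianReal (m i) (v i)) 0
    set e := MeasurableEquiv.piFinSuccAbove (fun _ : Fin (n+1) => ℝ) 0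
    have hsum : (fun x : Fin (n+1) → ℝ => ∑ i, c i * x i)
        = (fun p : ℝ × (Fin n → ℝ) => c 0 * p.1 + ∑ i : Fin n, c i.succ * p.2 i) ∘ e := by
      funext x
      simp only [Function.comp_apply, e, MeasurableEquiv.piFinSuccAbove]
      rw [Fin.sum_univ_succ]
      rfl
    rw [hsum, ← Measure.map_map (by fun_prop) e.measurable, hmp.map_eq,
      map_prod_add (f := fun x : ℝ => c 0 * x)
        (g := fun t : Fin n → ℝ => ∑ i, c i.succ * t i) _ _ (by fun_prop) (by fun_prop),
      gaussianReal_map_const_mul (c 0), ih (fun i => c i.succ) _ _, gauss_conv,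
      Fin.sum_univ_succ (f := fun i => c i * m i),
      Fin.sum_univ_succ (f := fun i => (c i ^2).toNNReal * v i)]
    congr 2
    ext
    simp [Real.coe_toNNReal _ (sq_nonneg (c 0))]

lemma measurable_dot {d : ℕ} (c : Vec d) : Measurable (fun x : Vec d => dot c x) := by
  unfold dot
  fun_prop

lemma measurable_pred {d : ℕ} (w : Inp d) : Measurable (pred w) := by
  unfold pred
  exact (((measurable_dot w.1).comp measurable_fst).add
    ((measurable_dot w.2.1).comp (measurable_fst.comp measurable_snd))).add
    ((measurable_dot w.2.2).comp (measurable_snd.comp measurable_snd))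

lemma measurable_rsign : Measurable Real.sign := by
  have : Real.sign = fun r : ℝ => if r < 0 then (-1:ℝ) else if 0 < r then 1 else 0 :=
    funext fun r => rfl
  rw [this]
  exact Measurable.ite (measurableSet_lt measurable_id measurable_const) measurable_const
    (Measurable.ite (measurableSet_lt measurable_const measurable_id)
      measurable_const measurable_const)

lemma rsign_eq_one_iff (x : ℝ) : Real.sign x = 1 ↔ 0 < x := by
  rcases lt_trichotomy x 0 with h | h | h
  · simp [Real.sign_of_neg h, h.not_gt]
    norm_num
  · simp [h]
  · simp [Real.sign_of_pos h, h]

lemma rsign_eq_neg_one_iff (x : ℝ) : Real.sign x = -1 ↔ x < 0 := by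
  rcases lt_trichotomy x 0 with h | h | h
  · simp [Real.sign_of_neg h, h]
  · simp [h]
  · simp [Real.sign_of_pos h, h.not_gt]
    norm_num

instance gaussVec_prob (d : ℕ) (m : Vec d) (v : ℝ) :
    IsProbabilityMeasure (gaussVec d m v) := by
  unfold gaussVec
  infer_instance

lemma gaussVec_dot (d : ℕ) (c m : Vec d) (v : ℝ) :
    (gaussVec d m v).map (fun x => dot c x)
      = gaussianReal (∑ i, c i * m i) (∑ i, (c i ^ 2).toNNReal * v.toNNReal) := by
  unfold gaussVec dot
  exact gauss_pi_dot d c m _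

/-- Law of `pred (w1, w2, 0)` under `condX1 d μ σ γ η y`. -/
lemma map_pred_condX1 (d : ℕ) (μ : Vec d) (σ γ η : ℝ) (hσ : 0 < σ) (hγ : 0 < γ)
    (w1 w2 : Vec d) (y : ℝ) :
    (condX1 d μ σ γ η y).map (pred (w1, w2, (0 : Vec d)))
      = gaussianReal (y * dot (w1 + w2) μ)
        ((σ^2 * (∑ i, w1 i ^ 2) + γ * σ^2 * (∑ i, w2 i ^ 2)).toNNReal) := by
  have hpred : (pred (w1, w2, (0 : Vec d)))
      = fun x : Inp d => dot w1 x.1 + (dot w2 x.2.1 + dot (0 : Vec d) x.2.2) := by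
    funext x
    simp only [pred]
    ring
  unfold condX1
  rw [hpred,
    map_prod_add (f := fun t => dot w1 t)
      (g := fun q : Vec d × Vec d => dot w2 q.1 + dot (0 : Vec d) q.2) _ _
      (measurable_dot w1)
      (((measurable_dot w2).comp measurable_fst).add
        ((measurable_dot (0 : Vec d)).comp measurable_snd)),
    map_prod_add (f := fun t => dot w2 t) (g := fun t => dot (0 : Vec d) t) _ _
      (measurable_dot w2) (measurable_dot (0 : Vec d)),
    gaussVec_dot, gaussVec_dot, gaussVec_dot, gauss_conv, gauss_conv]
  congr 1
  · rw [Pi.zero_def]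
    simp only [zero_mul, Finset.sum_const_zero, add_zero]
    rw [← Finset.sum_add_distrib]
    unfold dot
    rw [Finset.mul_sum]
    congr 1
    funext i
    simp [Pi.add_apply]
    ring
  · rw [Pi.zero_def]
    simp only [ne_eq, OfNat.ofNat_ne_zero, not_false_eq_true, zero_pow, Real.toNNReal_zero,
      zero_mul, Finset.sum_const_zero, add_zero]
    have e1 : ∀ (c : Vec d) (v : ℝ), 0 ≤ v →
        ∑ i, ((c i ^ 2).toNNReal * v.toNNReal : ℝ≥0) = (∑ i, v * c i ^ 2).toNNReal := by
      intro c v hv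
      rw [Real.toNNReal_sum_of_nonneg (fun i _ => by positivity)]
      exact Finset.sum_congr rfl fun i _ => by
        rw [← Real.toNNReal_mul (sq_nonneg _), mul_comm]
    rw [e1 w1 _ (by positivity), e1 w2 _ (by positivity),
      Real.toNNReal_add (by positivity) (by positivity)]
    rw [Finset.mul_sum, Finset.mul_sum]

instance condX1_prob (d : ℕ) (μ : Vec d) (σ γ η y : ℝ) :
    IsProbabilityMeasure (condX1 d μ σ γ η y) := by
  unfold condX1 gaussVec
  infer_instance

end Aux

theorem accuracy_formula_context_c1 (d : ℕ) (hd : 1 ≤ d) (μ : Vec d) (hμ : μ ≠ 0)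
    (σ γ η : ℝ) (hσ : 0 < σ) (hγ : 0 < γ) (hη : 0 < η)
    (w1 w2 : Vec d) (hw : ¬(w1 = 0 ∧ w2 = 0)) :
    AccP (Pc1 d μ σ γ η) (w1, w2, (0 : Vec d)) =
      0.5 * erfc (-(dot (w1 + w2) μ) /
        (σ * Real.sqrt (2 * (vnorm w1 ^ 2 + γ * vnorm w2 ^ 2)))) := by
  classical
  set w : Inp d := (w1, w2, (0 : Vec d)) with hwdef
  set m : ℝ := dot (w1 + w2) μ with hm
  set A : ℝ := ∑ i, w1 i ^ 2 with hA
  set B : ℝ := ∑ i, w2 i ^ 2 with hB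
  have hAnn : 0 ≤ A := Finset.sum_nonneg fun i _ => sq_nonneg _
  have hBnn : 0 ≤ B := Finset.sum_nonneg fun i _ => sq_nonneg _
  have hAB : 0 < A + γ * B := by
    rcases not_and_or.mp hw with h | h
    · have ⟨i, hi⟩ := Function.ne_iff.mp h
      have h1 : 0 < w1 i ^ 2 := by
        have : w1 i ≠ 0 := by simpa using hi
        positivity
      have h2 : w1 i ^ 2 ≤ A :=
        Finset.single_le_sum (fun j _ => sq_nonneg (w1 j)) (Finset.mem_univ i)
      nlinarith
    · have ⟨i, hi⟩ := Function.ne_iff.mp h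
      have h1 : 0 < w2 i ^ 2 := by
        have : w2 i ≠ 0 := by simpa using hi
        positivity
      have h2 : w2 i ^ 2 ≤ B :=
        Finset.single_le_sum (fun j _ => sq_nonneg (w2 j)) (Finset.mem_univ i)
      nlinarith
  have hVpos : 0 < σ ^ 2 * A + γ * σ ^ 2 * B := by nlinarith [sq_nonneg σ, pow_pos hσ 2]
  set V : ℝ≥0 := (σ ^ 2 * A + γ * σ ^ 2 * B).toNNReal with hV
  have hVne : V ≠ 0 := by
    simp only [hV, ne_eq, Real.toNNReal_eq_zero, not_le]
    exact hVpos
  have hVcoe : (V : ℝ) = σ ^ 2 * A + γ * σ ^ 2 * B := Real.coe_toNNReal _ hVpos.le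
  set E : Set (Inp d × ℝ) := {p | Real.sign (pred w p.1) = p.2} with hE
  have hEm : MeasurableSet E :=
    measurableSet_eq_fun (measurable_rsign.comp ((measurable_pred w).comp measurable_fst))
      measurable_snd
  have hmap1 := map_pred_condX1 d μ σ γ η hσ hγ w1 w2 1
  have hmap2 := map_pred_condX1 d μ σ γ η hσ hγ w1 w2 (-1)
  rw [one_mul, ← hm, ← hA, ← hB, ← hV] at hmap1
  rw [neg_one_mul, ← hm, ← hA, ← hB, ← hV] at hmap2
  have hq1 : ((condX1 d μ σ γ η 1).prod (Measure.dirac (1 : ℝ))) E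
      = gaussianReal m V (Set.Ioi 0) := by
    rw [Measure.prod_dirac, Measure.map_apply measurable_prodMk_right hEm]
    have hpre : ((fun x : Inp d => (x, (1 : ℝ))) ⁻¹' E) = pred w ⁻¹' Set.Ioi 0 := by
      ext x
      simp only [hE, Set.mem_preimage, Set.mem_setOf_eq, Set.mem_Ioi]
      exact rsign_eq_one_iff _
    rw [hpre, ← Measure.map_apply (measurable_pred w) measurableSet_Ioi, hmap1]
  have hq2 : ((condX1 d μ σ γ η (-1)).prod (Measure.dirac (-1 : ℝ))) E
      = gaussianReal m V (Set.Ioi 0) := by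
    rw [Measure.prod_dirac, Measure.map_apply measurable_prodMk_right hEm]
    have hpre : ((fun x : Inp d => (x, (-1 : ℝ))) ⁻¹' E) = pred w ⁻¹' Set.Iio 0 := by
      ext x
      simp only [hE, Set.mem_preimage, Set.mem_setOf_eq, Set.mem_Iio]
      exact rsign_eq_neg_one_iff _
    rw [hpre, ← Measure.map_apply (measurable_pred w) measurableSet_Iio, hmap2]
    have hneg := gaussianReal_map_const_mul (μ := m) (v := V) (-1)
    have hone : NNReal.mk ((-1 : ℝ) ^ 2) (sq_nonneg (-1 : ℝ)) = 1 := by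
      ext : 1
      norm_num
    rw [hone, one_mul, neg_one_mul] at hneg
    rw [← hneg, Measure.map_apply (by fun_prop) measurableSet_Iio]
    congr 1
    ext x
    simp only [Set.mem_preimage, Set.mem_Iio, Set.mem_Ioi]
    constructor <;> intro h <;> nlinarith
  have hPc1 : Pc1 d μ σ γ η E = gaussianReal m V (Set.Ioi 0) := by
    rw [Pc1, jointOf, Measure.add_apply, Measure.smul_apply, Measure.smul_apply, hq1, hq2,
      smul_eq_mul, ← add_mul, ENNReal.inv_two_add_inv_two, one_mul]
  set r : ℝ := ∫ x in Set.Ioi (0 : ℝ), gaussianPDFReal m V x with hr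
  have hrnn : 0 ≤ r :=
    setIntegral_nonneg measurableSet_Ioi fun x _ => gaussianPDFReal_nonneg _ _ _
  have hacc : AccP (Pc1 d μ σ γ η) w = r := by
    rw [show AccP (Pc1 d μ σ γ η) w = ((Pc1 d μ σ γ η) E).toReal from rfl, hPc1,
      gaussianReal_apply_eq_integral _ hVne _, ENNReal.toReal_ofReal hrnn]
  rw [hacc]
  -- now compute r
  have hVpos' : (0:ℝ) < (V:ℝ) := by rw [hVcoe]; exact hVpos
  have hsq : σ * Real.sqrt (2 * (vnorm w1 ^ 2 + γ * vnorm w2 ^ 2))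
      = Real.sqrt (2 * (V:ℝ)) := by
    have h1 : vnorm w1 ^ 2 = A := Real.sq_sqrt (Finset.sum_nonneg fun i _ => sq_nonneg _)
    have h2 : vnorm w2 ^ 2 = B := Real.sq_sqrt (Finset.sum_nonneg fun i _ => sq_nonneg _)
    rw [h1, h2, hVcoe, show σ = Real.sqrt (σ ^ 2) by rw [Real.sqrt_sq hσ.le],
      ← Real.sqrt_mul (by positivity)]
    · congr 1
      ring_nf
      rw [Real.sq_sqrt (by positivity)]
      ring
  rw [hsq]
  set b : ℝ := (Real.sqrt (2 * (V:ℝ)))⁻¹ with hb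
  have hbpos : 0 < b := by positivity
  have hbsq : b ^ 2 = (2 * (V:ℝ))⁻¹ := by
    rw [hb, ← Real.sqrt_inv, Real.sq_sqrt (by positivity)]
  have hshift : ∀ x : ℝ, gaussianPDFReal m V x
      = (Real.sqrt (2 * π * (V:ℝ)))⁻¹ * rexp (-(b * (x + -m)) ^ 2) := by
    intro x
    simp only [gaussianPDFReal]
    congr 2
    rw [mul_pow, hbsq]
    field_simp
    ring
  simp_rw [hr, hshift, MeasureTheory.integral_const_mul]
  have hemb : MeasurableEmbedding (fun x : ℝ => x + -m) :=
    (Homeomorph.addRight (-m)).measurableEmbedding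
  have hpre2 : (fun x : ℝ => x + -m) ⁻¹' Set.Ioi (-m) = Set.Ioi (0 : ℝ) := by
    ext x
    simp only [Set.mem_preimage, Set.mem_Ioi]
    constructor <;> intro h <;> linarith
  have hshift2 : ∫ x in Set.Ioi (0 : ℝ), rexp (-(b * (x + -m)) ^ 2)
      = ∫ u in Set.Ioi (-m), rexp (-(b * u) ^ 2) := by
    rw [← hpre2]
    exact (measurePreserving_add_right volume (-m)).setIntegral_preimage_emb hemb
      (fun u => rexp (-(b * u) ^ 2)) (Set.Ioi (-m))
  rw [hshift2, integral_comp_mul_left_Ioi (fun t => rexp (-t ^ 2)) (-m) hbpos]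
  have harg : b * (-m) = -m / (Real.sqrt (2 * (V:ℝ))) := by
    rw [hb]; ring
  rw [harg, smul_eq_mul, ← mul_assoc]
  have hconst : (Real.sqrt (2 * π * (V:ℝ)))⁻¹ * b⁻¹ = (Real.sqrt π)⁻¹ := by
    rw [hb, inv_inv, show 2 * π * (V:ℝ) = π * (2 * (V:ℝ)) by ring,
      Real.sqrt_mul Real.pi_pos.le]
    have h2 : Real.sqrt (2 * (V:ℝ)) ≠ 0 := by positivity
    field_simp
  rw [hconst]
  simp only [erfc]
  ring
end

section
/- Let w_irm = [μ/‖μ‖₂, 0_d, 0_d] ∈ ℝ^{3d}. Then (i) Acc_{P_{c1}}(w_irm) = Acc_{P_{c2}}(w_irm) = 0.5·erfc(−ρ1), and (ii) for every predictor of the form w = [w', 0_d, 0_d] with ‖w'‖₂ ≤ 1, both Acc_{P_{c1}}(w) ≤ 0.5·erfc(−ρ1) and Acc_{P_{c2}}(w) ≤ 0.5·erfc(−ρ1); that is, the optimal predictor restricted to the invariant feature x1 achieves accuracy 0.5·erfc(−ρ1) on both contexts. -/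
open MeasureTheory ProbabilityTheory Real Filter
open scoped ENNReal NNReal

noncomputable section AuxProofs

open Set

namespace IrmAux

lemma sign_eq_one_iff' (r : ℝ) : Real.sign r = 1 ↔ 0 < r := by
  constructor
  · intro h
    rcases lt_trichotomy r 0 with h1 | h1 | h1
    · rw [Real.sign_of_neg h1] at h; norm_num at h
    · rw [h1, Real.sign_zero] at h; norm_num at h
    · exact h1
  · exact Real.sign_of_pos

lemma sign_eq_neg_one_iff' (r : ℝ) : Real.sign r = -1 ↔ r < 0 := by
  constructor
  · intro h
    rcases lt_trichotomy r 0 with h1 | h1 | h1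
    · exact h1
    · rw [h1, Real.sign_zero] at h; norm_num at h
    · rw [Real.sign_of_pos h1] at h; norm_num at h
  · exact Real.sign_of_neg

lemma measurable_sign : Measurable Real.sign := by
  have : Real.sign = fun r : ℝ => if r < 0 then (-1 : ℝ) else if 0 < r then 1 else 0 :=
    funext fun r => rfl
  rw [this]
  exact Measurable.ite measurableSet_Iio measurable_const
    (Measurable.ite measurableSet_Ioi measurable_const measurable_const)

lemma pdf_mul (a b z x : ℝ) (s t : ℝ≥0) (hs : s ≠ 0) (ht : t ≠ 0) :
    gaussianPDFReal a s x * gaussianPDFReal b t (z - x)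
      = gaussianPDFReal (a + s*(z-a-b)/(s+t)) (s*t/(s+t)) x
        * gaussianPDFReal (a+b) (s+t) z := by
  have hS : (0:ℝ) < s := lt_of_le_of_ne s.coe_nonneg (by exact_mod_cast (Ne.symm hs))
  have hT : (0:ℝ) < t := lt_of_le_of_ne t.coe_nonneg (by exact_mod_cast (Ne.symm ht))
  have hST : (0:ℝ) < (s:ℝ) + t := by positivity
  have hcoe1 : ((s*t/(s+t) : ℝ≥0) : ℝ) = (s:ℝ)*t/((s:ℝ)+t) := by push_cast; ring
  have hcoe2 : ((s+t : ℝ≥0) : ℝ) = (s:ℝ)+t := by push_cast; ring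
  unfold gaussianPDFReal
  rw [hcoe1, hcoe2]
  rw [mul_mul_mul_comm, mul_mul_mul_comm ((Real.sqrt (2*π*((s:ℝ)*t/((s:ℝ)+t))))⁻¹),
    ← Real.exp_add, ← Real.exp_add]
  congr 1
  · rw [← mul_inv, ← mul_inv, ← Real.sqrt_mul (by positivity), ← Real.sqrt_mul (by positivity)]
    congr 1
    field_simp
  · congr 1
    field_simp
    ring

lemma lintegral_pdf_conv (a b z : ℝ) (s t : ℝ≥0) (hs : s ≠ 0) (ht : t ≠ 0) :
    ∫⁻ x, gaussianPDF a s x * gaussianPDF b t (z - x) = gaussianPDF (a+b) (s+t) z := by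
  have hv : (s*t/(s+t) : ℝ≥0) ≠ 0 := by
    have : s + t ≠ 0 := by simp [hs, ht]
    positivity
  have key : ∀ x, gaussianPDF a s x * gaussianPDF b t (z - x)
      = ENNReal.ofReal (gaussianPDFReal (a + s*(z-a-b)/(s+t)) (s*t/(s+t)) x
          * gaussianPDFReal (a+b) (s+t) z) := by
    intro x
    rw [gaussianPDF, gaussianPDF, ← ENNReal.ofReal_mul (gaussianPDFReal_nonneg _ _ _),
      pdf_mul a b z x s t hs ht]
  simp_rw [key]
  rw [← ofReal_integral_eq_lintegral_ofReal
      ((integrable_gaussianPDFReal _ _).mul_const _)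
      (Filter.Eventually.of_forall fun x =>
        mul_nonneg (gaussianPDFReal_nonneg _ _ _) (gaussianPDFReal_nonneg _ _ _))]
  rw [integral_mul_const, integral_gaussianPDFReal_eq_one _ hv, one_mul, gaussianPDF]

lemma gauss_map_add (a b : ℝ) (s t : ℝ≥0) :
    ((gaussianReal a s).prod (gaussianReal b t)).map (fun p : ℝ × ℝ => p.1 + p.2)
      = gaussianReal (a+b) (s+t) := by
  rcases eq_or_ne s 0 with hs | hs
  · rw [hs, gaussianReal_zero_var, Measure.dirac_prod, Measure.map_map (by fun_prop) (by fun_prop)]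
    have : ((fun p : ℝ × ℝ => p.1 + p.2) ∘ Prod.mk a) = fun x => a + x := rfl
    rw [this, gaussianReal_map_const_add, zero_add, add_comm]
  rcases eq_or_ne t 0 with ht | ht
  · rw [ht, gaussianReal_zero_var, Measure.prod_dirac, Measure.map_map (by fun_prop) (by fun_prop)]
    have : ((fun p : ℝ × ℝ => p.1 + p.2) ∘ (fun x => (x, b))) = fun x => x + b := rfl
    rw [this, gaussianReal_map_add_const, add_zero]
  have hst : s + t ≠ 0 := by simp [hs]
  ext A hA
  rw [Measure.map_apply (by fun_prop) hA, Measure.prod_apply (hA.preimage (by fun_prop))]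
  have h1 : ∀ x : ℝ, (Prod.mk x ⁻¹' ((fun p : ℝ × ℝ => p.1 + p.2) ⁻¹' A))
      = (fun y => x + y) ⁻¹' A := fun x => rfl
  have h2 : ∀ x : ℝ, (gaussianReal b t) ((fun y => x + y) ⁻¹' A)
      = ∫⁻ z, A.indicator (fun z => gaussianPDF b t (z - x)) z := by
    intro x
    rw [gaussianReal_of_var_ne_zero b ht,
      withDensity_apply _ (hA.preimage (by fun_prop)),
      ← lintegral_indicator (hA.preimage (measurable_const_add x)) (gaussianPDF b t)]
    have : ∀ y : ℝ, ((fun y => x + y) ⁻¹' A).indicator (gaussianPDF b t) y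
        = A.indicator (fun z => gaussianPDF b t (z - x)) (x + y) := by
      intro y
      by_cases hy : x + y ∈ A
      · rw [Set.indicator_of_mem hy, Set.indicator_of_mem (by exact hy)]
        simp
      · rw [Set.indicator_of_notMem hy, Set.indicator_of_notMem (by exact hy)]
    simp_rw [this]
    exact lintegral_add_left_eq_self _ x
  simp_rw [h1, h2]
  have hmeas : Measurable fun x => ∫⁻ z, A.indicator (fun z => gaussianPDF b t (z - x)) z := by
    apply Measurable.lintegral_prod_right
      (f := fun x z => A.indicator (fun z => gaussianPDF b t (z - x)) z)
    apply Measurable.indicator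
    · exact (measurable_gaussianPDF b t).comp (by fun_prop)
    · exact hA.preimage measurable_snd
  rw [gaussianReal_of_var_ne_zero a hs,
    lintegral_withDensity_eq_lintegral_mul _ (measurable_gaussianPDF a s) hmeas]
  have h3 : ∀ x : ℝ, gaussianPDF a s x * ∫⁻ z, A.indicator (fun z => gaussianPDF b t (z - x)) z
      = ∫⁻ z, A.indicator (fun z => gaussianPDF a s x * gaussianPDF b t (z - x)) z := by
    intro x
    have hg : Measurable fun z : ℝ => gaussianPDF b t (z - x) :=
      (measurable_gaussianPDF b t).comp (measurable_id.sub measurable_const)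
    rw [← lintegral_const_mul _ (hg.indicator hA)]
    congr 1
    ext z
    rw [Set.indicator_mul_right]
  simp only [Pi.mul_apply, h3]
  rw [lintegral_lintegral_swap]
  · have h4 : ∀ z : ℝ, ∫⁻ x, A.indicator (fun z => gaussianPDF a s x * gaussianPDF b t (z - x)) z
        = A.indicator (fun z => gaussianPDF (a+b) (s+t) z) z := by
      intro z
      by_cases hz : z ∈ A
      · simp only [Set.indicator_of_mem hz]
        exact lintegral_pdf_conv a b z s t hs ht
      · simp [Set.indicator_of_notMem hz]
    simp_rw [h4]
    rw [lintegral_indicator hA, gaussianReal_apply _ hst A]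
  · apply Measurable.aemeasurable
    apply Measurable.indicator
    · exact ((measurable_gaussianPDF a s).comp measurable_fst).mul
        ((measurable_gaussianPDF b t).comp (by fun_prop))
    · exact hA.preimage measurable_snd

lemma sq_nnreal (c : ℝ) : (NNReal.mk (c^2) (sq_nonneg c)) = (c^2).toNNReal := by
  ext; simp [Real.coe_toNNReal _ (sq_nonneg c)]

lemma pi_gauss_map_sum : ∀ (n : ℕ) (w m : Fin n → ℝ) (v : Fin n → ℝ≥0),
    (Measure.pi fun i => gaussianReal (m i) (v i)).map (fun x => ∑ i, w i * x i)
      = gaussianReal (∑ i, w i * m i) (∑ i, ((w i)^2).toNNReal * v i) := by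
  intro n
  induction n with
  | zero =>
    intro w m v
    have : (fun x : Fin 0 → ℝ => ∑ i, w i * x i) = fun _ => (0:ℝ) := by
      funext x; simp
    rw [this, Measure.map_const]
    simp [gaussianReal_zero_var]
  | succ n ih =>
    intro w m v
    have MP := measurePreserving_piFinSuccAbove (fun i => gaussianReal (m i) (v i)) 0
    set e := MeasurableEquiv.piFinSuccAbove (fun _ : Fin (n+1) => ℝ) 0 with he
    have hfact : (fun x : Fin (n+1) → ℝ => ∑ i, w i * x i)
        = (fun q : ℝ × ℝ => q.1 + q.2) ∘
          (Prod.map (fun x : ℝ => w 0 * x) (fun xt : Fin n → ℝ => ∑ j, w j.succ * xt j)) ∘ e := by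
      funext x
      simp only [Function.comp_apply, he, MeasurableEquiv.piFinSuccAbove,
        MeasurableEquiv.coe_mk, MeasurableEquiv.piFinSuccAbove_apply, Prod.map]
      rw [Fin.sum_univ_succ]
      simp [Fin.removeNth, Fin.succAbove_zero, Fin.tail]
    rw [hfact, ← Function.comp_assoc]
    rw [← Measure.map_map (by fun_prop) e.measurable]
    rw [MP.map_eq]
    rw [← Measure.map_map (by fun_prop) (by fun_prop)]
    rw [← Measure.map_prod_map _ _ (by fun_prop) (by fun_prop)]
    have h0 : ∀ j : Fin n, (0 : Fin (n+1)).succAbove j = j.succ := fun j => rfl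
    simp only [h0]
    rw [gaussianReal_map_const_mul (v := v 0) (μ := m 0) (w 0), ih, gauss_map_add,
      sq_nnreal]
    rw [Fin.sum_univ_succ (f := fun i => w i * m i),
      Fin.sum_univ_succ (f := fun i => ((w i)^2).toNNReal * v i)]

lemma std_gauss_Ioi (t : ℝ) :
    gaussianReal 0 1 (Set.Ioi t) = ENNReal.ofReal (0.5 * erfc (t / Real.sqrt 2)) := by
  rw [gaussianReal_apply_eq_integral 0 one_ne_zero]
  congr 1
  have hpdf : ∀ x : ℝ, gaussianPDFReal 0 1 x
      = (Real.sqrt (2 * π))⁻¹ * Real.exp (-(x * (Real.sqrt 2)⁻¹) ^ 2) := by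
    intro x
    rw [gaussianPDFReal]
    norm_num
    left
    rw [mul_pow, ← Real.sqrt_inv, Real.sq_sqrt (by norm_num : (0:ℝ) ≤ 2⁻¹)]
    ring
  simp_rw [hpdf]
  rw [MeasureTheory.integral_const_mul, integral_comp_mul_right_Ioi (fun u => Real.exp (-u^2)) t
    (by positivity : (0:ℝ) < (Real.sqrt 2)⁻¹)]
  rw [smul_eq_mul, erfc]
  have h2 : t * (Real.sqrt 2)⁻¹ = t / Real.sqrt 2 := by ring
  rw [h2, inv_inv, Real.sqrt_mul (by norm_num : (0:ℝ) ≤ 2)]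
  have hπ : (0:ℝ) < Real.sqrt π := Real.sqrt_pos.mpr Real.pi_pos
  have h2' : (0:ℝ) < Real.sqrt 2 := Real.sqrt_pos.mpr (by norm_num)
  field_simp
  ring

lemma gauss_Ioi (m : ℝ) (v : ℝ≥0) (hv : v ≠ 0) :
    gaussianReal m v (Set.Ioi 0)
      = ENNReal.ofReal (0.5 * erfc (-(m / (Real.sqrt 2 * Real.sqrt v)))) := by
  have hv' : (0:ℝ) < v := lt_of_le_of_ne v.coe_nonneg (by exact_mod_cast (Ne.symm hv))
  have hsv : (0:ℝ) < Real.sqrt v := Real.sqrt_pos.mpr hv'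
  have h1 : gaussianReal m v
      = ((gaussianReal 0 1).map (fun x => Real.sqrt v * x)).map (fun x => x + m) := by
    rw [gaussianReal_map_const_mul, gaussianReal_map_add_const, mul_zero, zero_add]
    congr 1
    ext
    simp [Real.sq_sqrt v.coe_nonneg]
  rw [h1, Measure.map_apply (by fun_prop) measurableSet_Ioi]
  have h2 : (fun x => x + m) ⁻¹' Set.Ioi 0 = Set.Ioi (-m) := by
    ext x; simp only [Set.mem_preimage, Set.mem_Ioi]; constructor <;> intro <;> linarith
  rw [h2, Measure.map_apply (by fun_prop) measurableSet_Ioi]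
  have h3 : (fun x => Real.sqrt v * x) ⁻¹' Set.Ioi (-m) = Set.Ioi (-m / Real.sqrt v) := by
    ext x
    simp only [Set.mem_preimage, Set.mem_Ioi]
    rw [div_lt_iff₀ hsv]
    constructor <;> intro <;> linarith
  rw [h3, std_gauss_Ioi]
  congr 2
  have h2' : (0:ℝ) < Real.sqrt 2 := Real.sqrt_pos.mpr (by norm_num)
  field_simp

lemma gauss_Iio (m : ℝ) (v : ℝ≥0) :
    gaussianReal m v (Set.Iio 0) = gaussianReal (-m) v (Set.Ioi 0) := by
  have h1 : gaussianReal (-m) v = (gaussianReal m v).map (fun x => (-1 : ℝ) * x) := by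
    rw [gaussianReal_map_const_mul]
    congr 1
    · ring
    · ext; norm_num
  rw [h1, Measure.map_apply (by fun_prop) measurableSet_Ioi]
  congr 1
  ext x
  simp only [Set.mem_preimage, Set.mem_Ioi, Set.mem_Iio]
  constructor <;> intro <;> linarith

lemma erfc_nonneg (x : ℝ) : 0 ≤ erfc x :=
  mul_nonneg (div_nonneg (by norm_num) (Real.sqrt_nonneg _))
    (setIntegral_nonneg measurableSet_Ioi fun t _ => (Real.exp_pos _).le)

lemma erfc_anti {x y : ℝ} (h : x ≤ y) : erfc y ≤ erfc x := by
  apply mul_le_mul_of_nonneg_left _ (div_nonneg (by norm_num) (Real.sqrt_nonneg _))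
  apply setIntegral_mono_set
  · have : Integrable (fun t : ℝ => Real.exp (-1 * t ^ 2)) := integrable_exp_neg_mul_sq one_pos
    simpa using this.integrableOn
  · exact Filter.Eventually.of_forall fun t => (Real.exp_pos _).le
  · exact HasSubset.Subset.eventuallyLE (Set.Ioi_subset_Ioi h)

lemma isProb_gaussVec (d : ℕ) (m : Vec d) (v : ℝ) : IsProbabilityMeasure (gaussVec d m v) := by
  unfold gaussVec; infer_instance

lemma measurable_dot {d : ℕ} (w : Vec d) : Measurable (dot w) := by
  unfold dot
  exact Finset.measurable_sum _ fun i _ => by fun_prop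

lemma gaussVec_map_dot {d : ℕ} (w m : Vec d) (v : ℝ) :
    (gaussVec d m v).map (dot w)
      = gaussianReal (dot w m) ((∑ i, w i ^ 2).toNNReal * v.toNNReal) := by
  unfold gaussVec dot
  rw [show (fun x : Vec d => ∑ i, w i * x i) = fun x : Vec d => ∑ i, w i * x i from rfl,
    pi_gauss_map_sum d w m (fun _ => v.toNNReal)]
  congr 1
  ext
  push_cast
  rw [show ((∑ i, w i ^ 2).toNNReal : ℝ) = ∑ i, w i ^ 2 from
    Real.coe_toNNReal _ (Finset.sum_nonneg fun i _ => sq_nonneg _), Finset.sum_mul]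
  exact Finset.sum_congr rfl fun i _ => by
    rw [Real.coe_toNNReal _ (sq_nonneg (w i))]

lemma vnorm_pos {d : ℕ} {w : Vec d} (hw : w ≠ 0) : 0 < vnorm w := by
  unfold vnorm
  apply Real.sqrt_pos.mpr
  obtain ⟨i, hi⟩ : ∃ i, w i ≠ 0 := by
    by_contra h
    push_neg at h
    exact hw (funext h)
  exact Finset.sum_pos' (fun j _ => sq_nonneg _) ⟨i, Finset.mem_univ i, by positivity⟩

lemma sumsq_pos {d : ℕ} {w : Vec d} (hw : w ≠ 0) : 0 < ∑ i, w i ^ 2 := by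
  obtain ⟨i, hi⟩ : ∃ i, w i ≠ 0 := by
    by_contra h
    push_neg at h
    exact hw (funext h)
  exact Finset.sum_pos' (fun j _ => sq_nonneg _) ⟨i, Finset.mem_univ i, by positivity⟩

lemma vnorm_smul {d : ℕ} (c : ℝ) (v : Vec d) : vnorm (c • v) = |c| * vnorm v := by
  unfold vnorm
  simp_rw [Pi.smul_apply, smul_eq_mul, mul_pow, ← Finset.mul_sum]
  rw [Real.sqrt_mul (sq_nonneg c), Real.sqrt_sq_eq_abs]

/-- The central accuracy computation. -/
lemma acc_eq (d : ℕ) (μ : Vec d) (σ : ℝ) (hσ : 0 < σ)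
    (ρ : ℝ → Measure (Vec d × Vec d)) (hρ : ∀ y, IsProbabilityMeasure (ρ y))
    (w' : Vec d) (hw : w' ≠ 0) :
    AccP (jointOf (fun y => (gaussVec d (fun i => μ i * y) (σ^2)).prod (ρ y)))
        ((w', (0 : Vec d), (0 : Vec d)) : Inp d)
      = 0.5 * erfc (-(dot w' μ / (Real.sqrt 2 * (vnorm w' * σ)))) := by
  classical
  haveI := hρ 1
  haveI := hρ (-1)
  haveI := isProb_gaussVec d (fun i => μ i * 1) (σ^2)
  haveI := isProb_gaussVec d (fun i => μ i * (-1)) (σ^2)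
  set vN : ℝ≥0 := (∑ i, w' i ^ 2).toNNReal * (σ^2).toNNReal with hvN
  have hvNne : vN ≠ 0 := by
    have h1 : (0:ℝ) < ∑ i, w' i ^ 2 := sumsq_pos hw
    have h2 : (0:ℝ) < σ^2 := by positivity
    simp only [hvN, mul_ne_zero_iff, ne_eq, Real.toNNReal_eq_zero, not_le]
    exact ⟨h1, h2⟩
  have hpred : ∀ x : Inp d, pred ((w', (0:Vec d), (0:Vec d)) : Inp d) x = dot w' x.1 := by
    intro x
    simp [pred, dot]
  have hmd := measurable_dot w'
  set S : Set (Inp d × ℝ) :=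
    {p | Real.sign (pred ((w', (0:Vec d), (0:Vec d)) : Inp d) p.1) = p.2} with hSdef
  have hSeq : S = {p : Inp d × ℝ | Real.sign (dot w' p.1.1) = p.2} := by
    ext p; simp only [hSdef, Set.mem_setOf_eq, hpred]
  have hS : MeasurableSet S := by
    rw [hSeq]
    exact measurableSet_eq_fun
      ((measurable_sign.comp (hmd.comp (measurable_fst.comp measurable_fst)))) measurable_snd
  have key : ∀ (y : ℝ) (hy : y = 1 ∨ y = -1),
      ((gaussVec d (fun i => μ i * y) (σ^2)).prod (ρ y)).prod (Measure.dirac y) S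
        = gaussianReal (dot w' μ) vN (Set.Ioi 0) := by
    intro y hy
    haveI := hρ y
    haveI := isProb_gaussVec d (fun i => μ i * y) (σ^2)
    rw [Measure.prod_dirac, Measure.map_apply (by fun_prop) hS]
    rcases hy with hy | hy
    · subst hy
      have hset : ((fun x : Inp d => (x, (1:ℝ))) ⁻¹' S)
          = Prod.fst ⁻¹' (dot w' ⁻¹' Set.Ioi 0) := by
        ext x
        simp only [hSeq, Set.mem_preimage, Set.mem_setOf_eq, Set.mem_Ioi]
        exact sign_eq_one_iff' _
      rw [hset, ← Measure.map_apply measurable_fst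
          ((hmd measurableSet_Ioi)), Measure.map_fst_prod, measure_univ, one_smul,
        ← Measure.map_apply hmd measurableSet_Ioi, gaussVec_map_dot]
      have hm : dot w' (fun i => μ i * 1) = dot w' μ := by
        unfold dot; exact Finset.sum_congr rfl fun i _ => by ring
      rw [hm]
    · subst hy
      have hset : ((fun x : Inp d => (x, (-1:ℝ))) ⁻¹' S)
          = Prod.fst ⁻¹' (dot w' ⁻¹' Set.Iio 0) := by
        ext x
        simp only [hSeq, Set.mem_preimage, Set.mem_setOf_eq, Set.mem_Iio]
        exact sign_eq_neg_one_iff' _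
      rw [hset, ← Measure.map_apply measurable_fst
          ((hmd measurableSet_Iio)), Measure.map_fst_prod, measure_univ, one_smul,
        ← Measure.map_apply hmd measurableSet_Iio, gaussVec_map_dot, gauss_Iio]
      have hm : -(dot w' fun i => μ i * (-1)) = dot w' μ := by
        unfold dot
        rw [← Finset.sum_neg_distrib]
        exact Finset.sum_congr rfl fun i _ => by ring
      rw [hm]
  have hPS : jointOf (fun y => (gaussVec d (fun i => μ i * y) (σ^2)).prod (ρ y)) S
      = gaussianReal (dot w' μ) vN (Set.Ioi 0) := by
    rw [jointOf, Measure.add_apply, Measure.smul_apply, Measure.smul_apply,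
      key 1 (Or.inl rfl), key (-1) (Or.inr rfl)]
    rw [← add_smul, ENNReal.inv_two_add_inv_two, one_smul]
  rw [AccP]
  rw [show {p : Inp d × ℝ | Real.sign (pred ((w', (0:Vec d), (0:Vec d)) : Inp d) p.1) = p.2}
      = S from rfl]
  rw [hPS, gauss_Ioi _ _ hvNne]
  rw [ENNReal.toReal_ofReal (mul_nonneg (by norm_num) (erfc_nonneg _))]
  congr 3
  rw [hvN]
  push_cast
  rw [Real.coe_toNNReal _ (le_of_lt (sumsq_pos hw)), Real.coe_toNNReal _ (sq_nonneg σ),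
    Real.sqrt_mul (le_of_lt (sumsq_pos hw)), Real.sqrt_sq hσ.le]
  rfl

/-- Accuracy of the zero predictor is zero. -/
lemma acc_zero (d : ℕ) (cond : ℝ → Measure (Inp d)) :
    AccP (jointOf cond) ((0, (0 : Vec d), (0 : Vec d)) : Inp d) = 0 := by
  have hpred : ∀ x : Inp d, pred ((0, (0:Vec d), (0:Vec d)) : Inp d) x = 0 := by
    intro x; simp [pred, dot]
  have hSeq : {p : Inp d × ℝ | Real.sign (pred ((0, (0:Vec d), (0:Vec d)) : Inp d) p.1) = p.2}
      = Prod.snd ⁻¹' ({0} : Set ℝ) := by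
    ext p
    simp only [Set.mem_setOf_eq, hpred, Real.sign_zero, Set.mem_preimage, Set.mem_singleton_iff]
    exact eq_comm
  rw [AccP, hSeq]
  have h0 : ∀ (ν : Measure (Inp d)) (y : ℝ), y ≠ 0 →
      (ν.prod (Measure.dirac y)) (Prod.snd ⁻¹' ({0} : Set ℝ)) = 0 := by
    intro ν y hy
    rw [Measure.prod_apply (measurable_snd (measurableSet_singleton (0:ℝ)))]
    have : ∀ x : Inp d, (Prod.mk x ⁻¹' (Prod.snd ⁻¹' ({0} : Set ℝ))) = ({0} : Set ℝ) := by
      intro x; rfl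
    simp_rw [this]
    simp [Measure.dirac_apply' _ (measurableSet_singleton (0:ℝ)),
      Set.indicator_of_notMem (by simpa using hy : y ∉ ({0} : Set ℝ)), Pi.single_apply, hy]
  rw [jointOf, Measure.add_apply, Measure.smul_apply, Measure.smul_apply,
    h0 _ 1 one_ne_zero, h0 _ (-1) (by norm_num)]
  simp

lemma dot_le_vnorm_mul_vnorm {d : ℕ} (v w : Vec d) : dot v w ≤ vnorm v * vnorm w := by
  unfold dot vnorm
  calc ∑ i, v i * w i ≤ |∑ i, v i * w i| := le_abs_self _
    _ = Real.sqrt ((∑ i, v i * w i)^2) := (Real.sqrt_sq_eq_abs _).symm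
    _ ≤ Real.sqrt ((∑ i, v i ^ 2) * ∑ i, w i ^ 2) :=
        Real.sqrt_le_sqrt (Finset.sum_mul_sq_le_sq_mul_sq _ _ _)
    _ = Real.sqrt (∑ i, v i ^ 2) * Real.sqrt (∑ i, w i ^ 2) :=
        Real.sqrt_mul (Finset.sum_nonneg fun i _ => sq_nonneg _) _

end IrmAux

end AuxProofs

theorem irm_accuracy (d : ℕ) (hd : 1 ≤ d) (μ : Vec d) (hμ : μ ≠ 0)
    (σ γ η : ℝ) (hσ : 0 < σ) (hγ : 0 < γ) (hη : 0 < η) :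
    AccP (Pc1 d μ σ γ η) (((vnorm μ)⁻¹ • μ, (0 : Vec d), (0 : Vec d)) : Inp d)
        = 0.5 * erfc (-(vnorm μ / (Real.sqrt 2 * σ))) ∧
    AccP (Pc2 d μ σ γ η) (((vnorm μ)⁻¹ • μ, (0 : Vec d), (0 : Vec d)) : Inp d)
        = 0.5 * erfc (-(vnorm μ / (Real.sqrt 2 * σ))) ∧
    ∀ w' : Vec d, vnorm w' ≤ 1 →
      AccP (Pc1 d μ σ γ η) ((w', (0 : Vec d), (0 : Vec d)) : Inp d)
          ≤ 0.5 * erfc (-(vnorm μ / (Real.sqrt 2 * σ))) ∧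
      AccP (Pc2 d μ σ γ η) ((w', (0 : Vec d), (0 : Vec d)) : Inp d)
          ≤ 0.5 * erfc (-(vnorm μ / (Real.sqrt 2 * σ))) := by
  classical
  have hρ1 : ∀ y : ℝ, IsProbabilityMeasure
      ((gaussVec d (fun i => μ i * y) (γ * σ^2)).prod (gaussVec d μ (η^2))) := by
    intro y
    haveI := IrmAux.isProb_gaussVec d (fun i => μ i * y) (γ * σ^2)
    haveI := IrmAux.isProb_gaussVec d μ (η^2)
    infer_instance
  have hρ2 : ∀ y : ℝ, IsProbabilityMeasure
      ((gaussVec d (fun i => -μ i * y) (σ^2 / γ)).prod (gaussVec d (fun i => -μ i) (η^2))) := by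
    intro y
    haveI := IrmAux.isProb_gaussVec d (fun i => -μ i * y) (σ^2 / γ)
    haveI := IrmAux.isProb_gaussVec d (fun i => -μ i) (η^2)
    infer_instance
  have hPc1 : ∀ w' : Vec d, w' ≠ 0 →
      AccP (Pc1 d μ σ γ η) ((w', (0 : Vec d), (0 : Vec d)) : Inp d)
        = 0.5 * erfc (-(dot w' μ / (Real.sqrt 2 * (vnorm w' * σ)))) := by
    intro w' hw'
    exact IrmAux.acc_eq d μ σ hσ _ hρ1 w' hw'
  have hPc2 : ∀ w' : Vec d, w' ≠ 0 →
      AccP (Pc2 d μ σ γ η) ((w', (0 : Vec d), (0 : Vec d)) : Inp d)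
        = 0.5 * erfc (-(dot w' μ / (Real.sqrt 2 * (vnorm w' * σ)))) := by
    intro w' hw'
    exact IrmAux.acc_eq d μ σ hσ _ hρ2 w' hw'
  have hμpos : 0 < vnorm μ := IrmAux.vnorm_pos hμ
  set w0 : Vec d := (vnorm μ)⁻¹ • μ with hw0
  have hw0ne : w0 ≠ 0 := by
    simp only [hw0]
    intro h
    apply hμ
    have := congrArg (fun v => vnorm μ • v) h
    simpa [smul_smul, mul_inv_cancel₀ hμpos.ne'] using this
  have hsum : (∑ i, μ i ^ 2) = vnorm μ ^ 2 := by
    rw [vnorm, Real.sq_sqrt (Finset.sum_nonneg fun i _ => sq_nonneg _)]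
  have hdot0 : dot w0 μ = vnorm μ := by
    simp only [hw0, dot, Pi.smul_apply, smul_eq_mul]
    have h1 : ∀ i : Fin d, (vnorm μ)⁻¹ * μ i * μ i = (vnorm μ)⁻¹ * μ i ^ 2 := fun i => by ring
    simp_rw [h1, ← Finset.mul_sum, hsum, sq, ← mul_assoc, inv_mul_cancel₀ hμpos.ne', one_mul]
  have hnorm0 : vnorm w0 = 1 := by
    rw [hw0, IrmAux.vnorm_smul, abs_of_pos (by positivity), inv_mul_cancel₀ hμpos.ne']
  have hval0 : -(dot w0 μ / (Real.sqrt 2 * (vnorm w0 * σ))) = -(vnorm μ / (Real.sqrt 2 * σ)) := by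
    rw [hdot0, hnorm0, one_mul]
  refine ⟨?_, ?_, ?_⟩
  · rw [hPc1 w0 hw0ne, hval0]
  · rw [hPc2 w0 hw0ne, hval0]
  · intro w' hw'norm
    have hbound : ∀ w' : Vec d,
        0.5 * erfc (-(dot w' μ / (Real.sqrt 2 * (vnorm w' * σ))))
          ≤ 0.5 * erfc (-(vnorm μ / (Real.sqrt 2 * σ))) ∨ True := fun _ => Or.inr trivial
    by_cases hz : w' = 0
    · subst hz
      have h1 := IrmAux.acc_zero d (condX1 d μ σ γ η)
      have h2 := IrmAux.acc_zero d (condX2 d μ σ γ η)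
      constructor
      · rw [show Pc1 d μ σ γ η = jointOf (condX1 d μ σ γ η) from rfl, h1]
        exact mul_nonneg (by norm_num) (IrmAux.erfc_nonneg _)
      · rw [show Pc2 d μ σ γ η = jointOf (condX2 d μ σ γ η) from rfl, h2]
        exact mul_nonneg (by norm_num) (IrmAux.erfc_nonneg _)
    · have hwpos : 0 < vnorm w' := IrmAux.vnorm_pos hz
      have harg : -(vnorm μ / (Real.sqrt 2 * σ)) ≤ -(dot w' μ / (Real.sqrt 2 * (vnorm w' * σ))) := by
        rw [neg_le_neg_iff]
        have hcs : dot w' μ ≤ vnorm w' * vnorm μ := IrmAux.dot_le_vnorm_mul_vnorm w' μ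
        have h2 : (0:ℝ) < Real.sqrt 2 := Real.sqrt_pos.mpr (by norm_num)
        rw [div_le_div_iff₀ (by positivity) (by positivity)]
        calc dot w' μ * (Real.sqrt 2 * σ) ≤ (vnorm w' * vnorm μ) * (Real.sqrt 2 * σ) := by
              apply mul_le_mul_of_nonneg_right hcs (by positivity)
          _ = vnorm μ * (Real.sqrt 2 * (vnorm w' * σ)) := by ring
      have hmono := IrmAux.erfc_anti harg
      have hle : 0.5 * erfc (-(dot w' μ / (Real.sqrt 2 * (vnorm w' * σ))))
          ≤ 0.5 * erfc (-(vnorm μ / (Real.sqrt 2 * σ))) := by linarith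
      exact ⟨by rw [hPc1 w' hz]; exact hle, by rw [hPc2 w' hz]; exact hle⟩
end

section
/- Let ρ1 > 0 and 0 < γ < 1. For every (λ1, λ2) ∈ ℝ² with λ1² + λ2² = 1, min{ erfc(−ρ1·(λ1+λ2)/√(λ1² + γλ2²)), erfc(−ρ1·(λ1−λ2)/√(λ1² + λ2²/γ)) } ≤ erfc(−ρ1), with equality at (λ1, λ2) = (1, 0). Hence the supremum of this min over the unit circle equals erfc(−ρ1) and is attained at (1, 0). -/
open MeasureTheory ProbabilityTheory Real Filter
open scoped ENNReal NNReal

lemma erfc_anti_aux {x y : ℝ} (h : x ≤ y) : erfc y ≤ erfc x := by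
  unfold erfc
  apply mul_le_mul_of_nonneg_left _ (by positivity)
  apply setIntegral_mono_set
  · have := integrable_exp_neg_mul_sq (b := 1) one_pos
    simpa using this.integrableOn
  · filter_upwards with t using (Real.exp_pos _).le
  · exact HasSubset.Subset.eventuallyLE (Set.Ioi_subset_Ioi h)

lemma arg_le_aux {ρ1 s D : ℝ} (hρ : 0 < ρ1) (hD : 0 < D) (h : s ≤ 0 ∨ s ^ 2 ≤ D) :
    ρ1 * s / Real.sqrt D ≤ ρ1 := by
  have hsD : 0 < Real.sqrt D := Real.sqrt_pos.mpr hD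
  rcases h with h | h
  · have : ρ1 * s ≤ 0 := mul_nonpos_of_nonneg_of_nonpos hρ.le h
    calc ρ1 * s / Real.sqrt D ≤ 0 := div_nonpos_of_nonpos_of_nonneg this hsD.le
    _ ≤ ρ1 := hρ.le
  · rcases le_or_gt s 0 with hs | hs
    · have : ρ1 * s ≤ 0 := mul_nonpos_of_nonneg_of_nonpos hρ.le hs
      calc ρ1 * s / Real.sqrt D ≤ 0 := div_nonpos_of_nonpos_of_nonneg this hsD.le
      _ ≤ ρ1 := hρ.le
    · have hsq : s ≤ Real.sqrt D := by
        rw [show s = Real.sqrt (s ^ 2) by rw [Real.sqrt_sq hs.le]]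
        exact Real.sqrt_le_sqrt h
      rw [div_le_iff₀ hsD]
      nlinarith

theorem condro_erfc_min_bound (ρ1 γ : ℝ) (hρ : 0 < ρ1) (hγ0 : 0 < γ) (hγ1 : γ < 1) :
    (∀ l1 l2 : ℝ, l1 ^ 2 + l2 ^ 2 = 1 →
      min (erfc (-(ρ1 * (l1 + l2) / Real.sqrt (l1 ^ 2 + γ * l2 ^ 2))))
          (erfc (-(ρ1 * (l1 - l2) / Real.sqrt (l1 ^ 2 + l2 ^ 2 / γ))))
        ≤ erfc (-ρ1)) ∧
    min (erfc (-(ρ1 * ((1 : ℝ) + 0) / Real.sqrt ((1 : ℝ) ^ 2 + γ * (0 : ℝ) ^ 2))))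
        (erfc (-(ρ1 * ((1 : ℝ) - 0) / Real.sqrt ((1 : ℝ) ^ 2 + (0 : ℝ) ^ 2 / γ))))
      = erfc (-ρ1) ∧
    IsGreatest {m : ℝ | ∃ l1 l2 : ℝ, l1 ^ 2 + l2 ^ 2 = 1 ∧
        m = min (erfc (-(ρ1 * (l1 + l2) / Real.sqrt (l1 ^ 2 + γ * l2 ^ 2))))
                (erfc (-(ρ1 * (l1 - l2) / Real.sqrt (l1 ^ 2 + l2 ^ 2 / γ))))}
      (erfc (-ρ1)) := by
  have key : ∀ l1 l2 : ℝ, l1 ^ 2 + l2 ^ 2 = 1 →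
      min (erfc (-(ρ1 * (l1 + l2) / Real.sqrt (l1 ^ 2 + γ * l2 ^ 2))))
          (erfc (-(ρ1 * (l1 - l2) / Real.sqrt (l1 ^ 2 + l2 ^ 2 / γ))))
        ≤ erfc (-ρ1) := by
    intro l1 l2 hl
    rcases le_or_gt l2 0 with h2 | h2
    · -- use first branch
      have hD : 0 < l1 ^ 2 + γ * l2 ^ 2 := by nlinarith [sq_nonneg l1, sq_nonneg l2]
      have harg : ρ1 * (l1 + l2) / Real.sqrt (l1 ^ 2 + γ * l2 ^ 2) ≤ ρ1 := by
        apply arg_le_aux hρ hD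
        rcases le_or_gt (l1 + l2) 0 with hs | hs
        · exact Or.inl hs
        · right; nlinarith
      exact le_trans (min_le_left _ _) (erfc_anti_aux (by linarith))
    · -- use second branch
      have hD : 0 < l1 ^ 2 + l2 ^ 2 / γ := by positivity
      have harg : ρ1 * (l1 - l2) / Real.sqrt (l1 ^ 2 + l2 ^ 2 / γ) ≤ ρ1 := by
        apply arg_le_aux hρ hD
        rcases le_or_gt (l1 - l2) 0 with hs | hs
        · exact Or.inl hs
        · right
          have h1 : (l1 - l2) ^ 2 ≤ l1 ^ 2 + l2 ^ 2 := by nlinarith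
          have h2' : l2 ^ 2 ≤ l2 ^ 2 / γ := by
            rw [le_div_iff₀ hγ0]; nlinarith [sq_nonneg l2]
          linarith
      exact le_trans (min_le_right _ _) (erfc_anti_aux (by linarith))
  have heq : min (erfc (-(ρ1 * ((1 : ℝ) + 0) / Real.sqrt ((1 : ℝ) ^ 2 + γ * (0 : ℝ) ^ 2))))
      (erfc (-(ρ1 * ((1 : ℝ) - 0) / Real.sqrt ((1 : ℝ) ^ 2 + (0 : ℝ) ^ 2 / γ))))
      = erfc (-ρ1) := by
    have : ((1 : ℝ) ^ 2 + γ * (0 : ℝ) ^ 2) = 1 := by ring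
    have h2 : ((1 : ℝ) ^ 2 + (0 : ℝ) ^ 2 / γ) = 1 := by
      field_simp
      ring
    rw [this, h2, Real.sqrt_one]
    norm_num
  refine ⟨key, heq, ?_, ?_⟩
  · exact ⟨1, 0, by norm_num, heq.symm⟩
  · rintro m ⟨l1, l2, hl, rfl⟩
    exact key l1 l2 hl
end
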